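/- For n ≥ 3 let P_n = (1/n)A_n and Q_n = (1/n)B_n, where A_n is the n×n Jordan nilpotent block and B_n has a single 1 at entry (n,1). Then ‖P_n‖ = ‖Q_n‖ = 1/n, the commutator [P_n, Q_n] is nilpotent, and P_n^{n−2}[P_n, Q_n] = diag(n^{−n}, −n^{−n}, 0, …, 0) is not nilpotent. -/

import Mathlib

/-- The n×n nilpotent Jordan block: 1's on the superdiagonal. -/
def jordanBlock (n : ℕ) : Matrix (Fin n) (Fin n) ℂ :=
  Matrix.of fun i j => if (i : ℕ) + 1 = (j : ℕ) then 1 else 0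

/-- The n×n matrix with a single 1 in position (n,1) (bottom-left corner). -/
def cornerMatrix (n : ℕ) : Matrix (Fin n) (Fin n) ℂ :=
  Matrix.of fun i j => if (i : ℕ) = n - 1 ∧ (j : ℕ) = 0 then 1 else 0

/-- P_n = (1/n)A_n, Q_n = (1/n)B_n. -/
noncomputable def Pmat (n : ℕ) : Matrix (Fin n) (Fin n) ℂ := (n : ℂ)⁻¹ • jordanBlock n
noncomputable def Qmat (n : ℕ) : Matrix (Fin n) (Fin n) ℂ := (n : ℂ)⁻¹ • cornerMatrix n

open Matrix

theorem jordan_mul_E {n : ℕ} (a b a' : Fin n) (h : (a' : ℕ) + 1 = (a : ℕ)) :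
    jordanBlock n * Matrix.single a b (1:ℂ) = Matrix.single a' b 1 := by
  ext i j
  simp only [mul_apply, jordanBlock, Matrix.single, Matrix.of_apply, ite_and, mul_ite, mul_one,
    mul_zero, ite_mul, one_mul, zero_mul, Finset.sum_ite_eq, Finset.mem_univ, if_true]
  rw [if_congr (show ((i:ℕ) + 1 = (a:ℕ)) ↔ (a' = i) by rw [Fin.ext_iff]; omega) rfl rfl]
  by_cases h1 : a' = i <;> by_cases h2 : b = j <;> simp [h1, h2]

theorem E_mul_jordan {n : ℕ} (a b b' : Fin n) (h : (b : ℕ) + 1 = (b' : ℕ)) :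
    Matrix.single a b (1:ℂ) * jordanBlock n = Matrix.single a b' 1 := by
  ext i j
  simp only [mul_apply, jordanBlock, Matrix.single, Matrix.of_apply, ite_and, mul_ite, mul_one,
    mul_zero, ite_mul, one_mul, zero_mul, Finset.sum_ite_eq, Finset.mem_univ, if_true]
  rw [Finset.sum_eq_single b (fun x _ hx => by simp [Ne.symm hx]) (by simp)]
  rw [if_congr (show ((b:ℕ) + 1 = (j:ℕ)) ↔ (b' = j) by rw [Fin.ext_iff]; omega) rfl rfl]
  by_cases h1 : a = i <;> by_cases h2 : b' = j <;> simp [h1, h2]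

theorem corner_eq {n : ℕ} (hn : 1 ≤ n) :
    cornerMatrix n = Matrix.single (⟨n-1, by omega⟩ : Fin n) (⟨0, by omega⟩ : Fin n) (1:ℂ) := by
  ext i j
  simp [cornerMatrix, Matrix.single, Fin.ext_iff, eq_comm]

theorem jordan_pow_mul_E {n : ℕ} (k : ℕ) (a b a' : Fin n) (h : (a' : ℕ) + k = (a : ℕ)) :
    (jordanBlock n) ^ k * Matrix.single a b (1:ℂ) = Matrix.single a' b 1 := by
  induction k generalizing a' with
  | zero =>
    have : a' = a := Fin.ext (by omega)
    subst this
    simp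
  | succ k ih =>
    have hlt : (a':ℕ) + 1 < n := by have := a.isLt; omega
    rw [pow_succ', mul_assoc, ih ⟨(a':ℕ)+1, hlt⟩ (by simp; omega),
      jordan_mul_E ⟨(a':ℕ)+1, hlt⟩ b a' rfl]

theorem clm_apply {n : ℕ} (A : Matrix (Fin n) (Fin n) ℂ) (x : EuclideanSpace ℂ (Fin n)) (i : Fin n) :
    Matrix.toEuclideanCLM (𝕜 := ℂ) A x i = ∑ j, A i j * x j := rfl

theorem sum_ite_val {M : Type*} [AddCommMonoid M] {n : ℕ} (a : ℕ) (f : Fin n → M) :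
    (∑ m : Fin n, if (m:ℕ) = a then f m else 0) = if h : a < n then f ⟨a,h⟩ else 0 := by
  split_ifs with h
  · rw [Finset.sum_eq_single ⟨a,h⟩ (fun x _ hx => if_neg (fun hc => hx (Fin.ext hc))) (by simp)]
    simp
  · exact Finset.sum_eq_zero fun x _ => if_neg (fun hc => h (by omega))

theorem jordan_apply {n : ℕ} (x : EuclideanSpace ℂ (Fin n)) (i : Fin n) :
    Matrix.toEuclideanCLM (𝕜 := ℂ) (jordanBlock n) x i
      = if h : (i:ℕ)+1 < n then x ⟨(i:ℕ)+1, h⟩ else 0 := by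
  rw [clm_apply, Finset.sum_congr rfl (fun j _ => by
    rw [show jordanBlock n i j * x j = if (j:ℕ) = (i:ℕ)+1 then x j else 0 by
      simp [jordanBlock, eq_comm, ite_mul]])]
  exact sum_ite_val _ _

theorem corner_apply {n : ℕ} (hn : 1 ≤ n) (x : EuclideanSpace ℂ (Fin n)) (i : Fin n) :
    Matrix.toEuclideanCLM (𝕜 := ℂ) (cornerMatrix n) x i
      = if (i:ℕ) = n - 1 then x ⟨0, by omega⟩ else 0 := by
  rw [clm_apply, Finset.sum_congr rfl (fun j _ => by
    rw [show cornerMatrix n i j * x j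
        = if (j:ℕ) = 0 then (if (i:ℕ) = n-1 then x j else 0) else 0 by
      simp [cornerMatrix, ite_and, ite_mul]; split_ifs <;> simp])]
  rw [sum_ite_val 0 (fun j => if (i:ℕ) = n-1 then x j else 0), dif_pos (by omega)]

theorem norm_jordan {n : ℕ} (hn : 2 ≤ n) :
    ‖Matrix.toEuclideanCLM (𝕜 := ℂ) (jordanBlock n)‖ = 1 := by
  have hn0 : n ≠ 0 := by omega
  haveI : NeZero n := ⟨hn0⟩
  apply le_antisymm
  · apply ContinuousLinearMap.opNorm_le_bound _ zero_le_one
    intro x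
    rw [one_mul, EuclideanSpace.norm_eq, EuclideanSpace.norm_eq]
    apply Real.sqrt_le_sqrt
    calc ∑ i, ‖Matrix.toEuclideanCLM (𝕜 := ℂ) (jordanBlock n) x i‖^2
        ≤ ∑ i : Fin n, ‖x (i+1)‖^2 := by
          apply Finset.sum_le_sum
          intro i _
          rw [jordan_apply]
          rcases Nat.lt_or_ge ((i:ℕ)+1) n with h | h
          · rw [dif_pos h]
            have he : (⟨(i:ℕ)+1, h⟩ : Fin n) = i + 1 :=
              Fin.ext (by rw [Fin.add_def]; simp [Nat.mod_eq_of_lt h])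
            rw [he]
          · rw [dif_neg (by omega)]
            simp
      _ = ∑ j : Fin n, ‖x j‖^2 :=
          Fintype.sum_equiv (Equiv.addRight 1) _ _ (fun i => rfl)
  · have key : Matrix.toEuclideanCLM (𝕜 := ℂ) (jordanBlock n)
        (EuclideanSpace.single ⟨1, by omega⟩ 1) = EuclideanSpace.single ⟨0, by omega⟩ 1 := by
      ext i
      rw [jordan_apply]
      simp only [EuclideanSpace.single_apply, Fin.ext_iff]
      split_ifs <;> first | rfl | omega
    have := Matrix.toEuclideanCLM (𝕜 := ℂ) (jordanBlock n) |>.le_opNorm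
      (EuclideanSpace.single ⟨1, by omega⟩ 1)
    rw [key, EuclideanSpace.norm_single, EuclideanSpace.norm_single, norm_one, mul_one] at this
    exact this

theorem norm_corner {n : ℕ} (hn : 2 ≤ n) :
    ‖Matrix.toEuclideanCLM (𝕜 := ℂ) (cornerMatrix n)‖ = 1 := by
  have hn0 : n ≠ 0 := by omega
  apply le_antisymm
  · apply ContinuousLinearMap.opNorm_le_bound _ zero_le_one
    intro x
    rw [one_mul, EuclideanSpace.norm_eq, EuclideanSpace.norm_eq]
    apply Real.sqrt_le_sqrt
    calc ∑ i, ‖Matrix.toEuclideanCLM (𝕜 := ℂ) (cornerMatrix n) x i‖^2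
        = ∑ i : Fin n, (if (i:ℕ) = n-1 then ‖x ⟨0, by omega⟩‖^2 else 0) := by
          apply Finset.sum_congr rfl
          intro i _
          rw [corner_apply (by omega)]
          split_ifs <;> simp
      _ = ‖x ⟨0, by omega⟩‖^2 := by
          rw [sum_ite_val (n-1) (fun _ => ‖x ⟨0, by omega⟩‖^2), dif_pos (by omega)]
      _ ≤ ∑ j : Fin n, ‖x j‖^2 := by
          apply Finset.single_le_sum (f := fun j => ‖x j‖^2) (fun j _ => by positivity)
          simp
  · have key : Matrix.toEuclideanCLM (𝕜 := ℂ) (cornerMatrix n)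
        (EuclideanSpace.single ⟨0, by omega⟩ 1) = EuclideanSpace.single ⟨n-1, by omega⟩ 1 := by
      ext i
      rw [corner_apply (by omega)]
      simp only [EuclideanSpace.single_apply, Fin.ext_iff]
      split_ifs <;> first | rfl | omega
    have := Matrix.toEuclideanCLM (𝕜 := ℂ) (cornerMatrix n) |>.le_opNorm
      (EuclideanSpace.single ⟨0, by omega⟩ 1)
    rw [key, EuclideanSpace.norm_single, EuclideanSpace.norm_single, norm_one, mul_one] at this
    exact this

set_option synthInstance.maxHeartbeats 1000000 in
set_option maxHeartbeats 1000000 in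
theorem stmt_16 (n : ℕ) (hn : 3 ≤ n) :
    ‖Matrix.toEuclideanCLM (𝕜 := ℂ) (Pmat n)‖ = 1 / n ∧
    ‖Matrix.toEuclideanCLM (𝕜 := ℂ) (Qmat n)‖ = 1 / n ∧
    IsNilpotent (Pmat n * Qmat n - Qmat n * Pmat n) ∧
    (Pmat n) ^ (n - 2) * (Pmat n * Qmat n - Qmat n * Pmat n) =
      Matrix.of (fun i j : Fin n =>
        if i = j ∧ (i : ℕ) = 0 then ((n : ℂ) ^ n)⁻¹
        else if i = j ∧ (i : ℕ) = 1 then -((n : ℂ) ^ n)⁻¹ else 0) ∧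
    ¬ IsNilpotent ((Pmat n) ^ (n - 2) * (Pmat n * Qmat n - Qmat n * Pmat n)) := by
  have hne : (n : ℂ) ≠ 0 := Nat.cast_ne_zero.mpr (by omega)
  have hnorm : ‖((n:ℂ)⁻¹)‖ = 1 / (n:ℝ) := by
    rw [norm_inv, Complex.norm_natCast, one_div]
  -- names for the standard basis matrices
  set u : Matrix (Fin n) (Fin n) ℂ :=
    Matrix.single (⟨n-2, by omega⟩ : Fin n) (⟨0, by omega⟩ : Fin n) 1 with hu
  set v : Matrix (Fin n) (Fin n) ℂ :=
    Matrix.single (⟨n-1, by omega⟩ : Fin n) (⟨1, by omega⟩ : Fin n) 1 with hv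
  have hAB : jordanBlock n * cornerMatrix n = u := by
    rw [corner_eq (by omega), jordan_mul_E _ _ (⟨n-2, by omega⟩ : Fin n) (by simp; omega)]
  have hBA : cornerMatrix n * jordanBlock n = v := by
    rw [corner_eq (by omega), E_mul_jordan _ _ (⟨1, by omega⟩ : Fin n) (by simp)]
  have hC : Pmat n * Qmat n - Qmat n * Pmat n = ((n:ℂ)^2)⁻¹ • (u - v) := by
    unfold Pmat Qmat
    rw [smul_mul_assoc, smul_mul_assoc, mul_smul_comm, mul_smul_comm, hAB, hBA,
      smul_smul, smul_smul, ← smul_sub, sq, mul_inv]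
  -- products of basis matrices
  have huu : u * u = 0 := Matrix.single_mul_single_of_ne (h := by simp [Fin.ext_iff]; omega) ..
  have huv : u * v = 0 := Matrix.single_mul_single_of_ne (h := by simp [Fin.ext_iff]; omega) ..
  have hvv : v * v = 0 := Matrix.single_mul_single_of_ne (h := by simp [Fin.ext_iff]; omega) ..
  have hsq : (u - v) * (u - v) = -(v * u) := by
    rw [mul_sub, sub_mul, sub_mul, huu, huv, hvv]
    abel
  have hcube : (u - v) ^ 3 = 0 := by
    rw [pow_succ, show (u-v)^2 = -(v*u) by rw [sq, hsq], neg_mul, mul_sub, mul_assoc, mul_assoc,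
      huu, huv]
    simp
  have h4 : (Pmat n) ^ (n - 2) * (Pmat n * Qmat n - Qmat n * Pmat n) =
      Matrix.of (fun i j : Fin n =>
        if i = j ∧ (i : ℕ) = 0 then ((n : ℂ) ^ n)⁻¹
        else if i = j ∧ (i : ℕ) = 1 then -((n : ℂ) ^ n)⁻¹ else 0) := by
    have hPow : (Pmat n) ^ (n-2) * (Pmat n * Qmat n - Qmat n * Pmat n)
        = ((n:ℂ)^n)⁻¹ • (Matrix.single (⟨0, by omega⟩ : Fin n) (⟨0, by omega⟩ : Fin n) (1:ℂ)
          - Matrix.single (⟨1, by omega⟩ : Fin n) (⟨1, by omega⟩ : Fin n) 1) := by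
      rw [hC, show Pmat n = (n:ℂ)⁻¹ • jordanBlock n from rfl, smul_pow,
        smul_mul_assoc, mul_smul_comm, mul_sub,
        jordan_pow_mul_E (n-2) _ _ (⟨0, by omega⟩ : Fin n) (by simp),
        jordan_pow_mul_E (n-2) _ _ (⟨1, by omega⟩ : Fin n) (by simp; omega),
        smul_smul]
      congr 1
      rw [inv_pow, ← mul_inv, ← pow_add, show n-2+2 = n by omega]
    rw [hPow]
    ext i j
    simp only [Matrix.smul_apply, Matrix.sub_apply, Matrix.single, of_apply, ite_and, Fin.ext_iff, smul_eq_mul]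
    by_cases h0 : (i:ℕ) = 0 <;> by_cases h1 : (j:ℕ) = 0 <;>
      by_cases h2 : (i:ℕ) = 1 <;> by_cases h3 : (j:ℕ) = 1 <;>
      simp [h0, h1, h2, h3, eq_comm] <;> omega
  set c : ℂ := ((n:ℂ)^n)⁻¹ with hc
  have hcne : c ≠ 0 := inv_ne_zero (pow_ne_zero _ hne)
  have h5 : Matrix.of (fun i j : Fin n =>
        if i = j ∧ (i : ℕ) = 0 then ((n : ℂ) ^ n)⁻¹
        else if i = j ∧ (i : ℕ) = 1 then -((n : ℂ) ^ n)⁻¹ else 0)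
      = Matrix.diagonal (fun i : Fin n => if (i:ℕ) = 0 then c else if (i:ℕ) = 1 then -c else 0) := by
    ext i j
    by_cases hij : i = j
    · subst hij; simp [Matrix.diagonal_apply, hc]
    · simp [Matrix.diagonal_apply, hij]
  refine ⟨?_, ?_, ?_, h4, ?_⟩
  · rw [show Pmat n = (n:ℂ)⁻¹ • jordanBlock n from rfl, _root_.map_smul,
      norm_smul ((n:ℂ)⁻¹) (Matrix.toEuclideanCLM (𝕜 := ℂ) (jordanBlock n)), hnorm,
      norm_jordan (by omega), mul_one]
  · rw [show Qmat n = (n:ℂ)⁻¹ • cornerMatrix n from rfl, _root_.map_smul,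
      norm_smul ((n:ℂ)⁻¹) (Matrix.toEuclideanCLM (𝕜 := ℂ) (cornerMatrix n)), hnorm,
      norm_corner (by omega), mul_one]
  · exact ⟨3, by rw [hC, smul_pow, hcube, smul_zero]⟩
  · rintro ⟨k, hk⟩
    rw [h4, h5, Matrix.diagonal_pow] at hk
    have h2 := congrFun (congrFun hk (⟨0, by omega⟩ : Fin n)) (⟨0, by omega⟩ : Fin n)
    simp only [Matrix.diagonal_apply_eq, Pi.pow_apply, Matrix.zero_apply] at h2
    simp only [if_true] at h2
    exact pow_ne_zero k hcne h2
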